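/- The Dunkl operators ∇_i = ∂_i + β Σ_{j≠i} (1/(x_i - x_j))(1 - K_{ij}) pairwise commute: [∇_i, ∇_j] = 0 for all i, j. -/

import Mathlib

set_option maxHeartbeats 1000000


open MvPolynomial

namespace DunklAux

variable {n : ℕ} {g : Fin n → Fin n → MvPolynomial (Fin n) ℂ → MvPolynomial (Fin n) ℂ}

lemma Xsub_ne {i j : Fin n} (h : i ≠ j) :
    (X i - X j : MvPolynomial (Fin n) ℂ) ≠ 0 :=
  sub_ne_zero.mpr fun he => h (MvPolynomial.X_injective he)

lemma gcancel {i j : Fin n} (h : i ≠ j) {p q : MvPolynomial (Fin n) ℂ}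
    (hpq : (X i - X j) * p = (X i - X j) * q) : p = q :=
  mul_left_cancel₀ (Xsub_ne h) hpq

section

variable (hg : ∀ i j f, (X i - X j) * g i j f = f - rename (Equiv.swap i j) f)

include hg

lemma g_add {i j : Fin n} (h : i ≠ j) (p q : MvPolynomial (Fin n) ℂ) :
    g i j (p + q) = g i j p + g i j q :=
  gcancel h (by rw [mul_add, hg, hg, hg, map_add]; ring)

lemma g_sub {i j : Fin n} (h : i ≠ j) (p q : MvPolynomial (Fin n) ℂ) :
    g i j (p - q) = g i j p - g i j q :=
  gcancel h (by rw [mul_sub, hg, hg, hg, map_sub]; ring)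

lemma g_neg {i j : Fin n} (h : i ≠ j) (p : MvPolynomial (Fin n) ℂ) :
    g i j (-p) = -(g i j p) :=
  gcancel h (by rw [mul_neg, hg, hg, map_neg]; ring)

lemma g_smul {i j : Fin n} (h : i ≠ j) (c : ℂ) (p : MvPolynomial (Fin n) ℂ) :
    g i j (c • p) = c • g i j p :=
  gcancel h (by rw [mul_smul_comm, hg, hg, map_smul, smul_sub])

lemma g_sum {i j : Fin n} (h : i ≠ j) {α : Type*} (s : Finset α)
    (p : α → MvPolynomial (Fin n) ℂ) :
    g i j (∑ l ∈ s, p l) = ∑ l ∈ s, g i j (p l) := by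
  refine gcancel h ?_
  rw [hg, map_sum, Finset.mul_sum, ← Finset.sum_sub_distrib]
  exact Finset.sum_congr rfl fun l _ => (hg i j (p l)).symm

lemma g_swap {i j : Fin n} (h : i ≠ j) (p : MvPolynomial (Fin n) ℂ) :
    g j i p = -(g i j p) := by
  refine gcancel h ?_
  have h1 := hg j i p
  have h2 := hg i j p
  rw [Equiv.swap_comm j i] at h1
  linear_combination h2 - h1

lemma g_rename (σ : Equiv.Perm (Fin n)) {i j : Fin n} (h : i ≠ j)
    (p : MvPolynomial (Fin n) ℂ) :
    rename σ (g i j p) = g (σ i) (σ j) (rename σ p) := by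
  refine gcancel (σ.injective.ne h) ?_
  have key : (⇑(Equiv.swap (σ i) (σ j)) ∘ ⇑σ : Fin n → Fin n) = ⇑σ ∘ ⇑(Equiv.swap i j) := by
    rw [Equiv.swap_apply_apply]
    funext x
    simp [Equiv.Perm.mul_apply]
  calc (X (σ i) - X (σ j)) * rename σ (g i j p)
      = rename σ ((X i - X j) * g i j p) := by rw [map_mul, map_sub, rename_X, rename_X]
    _ = rename σ p - rename (⇑σ ∘ ⇑(Equiv.swap i j)) p := by rw [hg, map_sub, rename_rename]
    _ = rename σ p - rename (⇑(Equiv.swap (σ i) (σ j)) ∘ ⇑σ) p := by rw [key]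
    _ = (X (σ i) - X (σ j)) * g (σ i) (σ j) (rename σ p) := by rw [← rename_rename, hg]

lemma g_mul_sym {i j : Fin n} (h : i ≠ j) {q : MvPolynomial (Fin n) ℂ}
    (hq : rename (Equiv.swap i j) q = q) (p : MvPolynomial (Fin n) ℂ) :
    g i j (q * p) = q * g i j p := by
  refine gcancel h ?_
  have h1 := hg i j (q * p)
  have h2 := hg i j p
  rw [map_mul, hq] at h1
  linear_combination h1 - q * h2

lemma g_pd_other {i j k : Fin n} (h : i ≠ j) (hki : k ≠ i) (hkj : k ≠ j)
    (p : MvPolynomial (Fin n) ℂ) :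
    pderiv k (g i j p) = g i j (pderiv k p) := by
  refine gcancel h ?_
  have hswapk : Equiv.swap i j k = k := Equiv.swap_apply_of_ne_of_ne hki hkj
  have hren := pderiv_rename (f := ⇑(Equiv.swap i j)) (Equiv.injective _) k p
  rw [hswapk] at hren
  have e1 := pderiv_mul (i := k) (f := (X i - X j : MvPolynomial (Fin n) ℂ)) (g := g i j p)
  have hz : pderiv k (X i - X j : MvPolynomial (Fin n) ℂ) = 0 := by
    rw [map_sub, pderiv_X_of_ne hki.symm, pderiv_X_of_ne hkj.symm, sub_zero]
  rw [hg, hz, zero_mul, zero_add, map_sub, hren] at e1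
  rw [← e1, hg]

lemma g_pd_sum {i j : Fin n} (h : i ≠ j) (p : MvPolynomial (Fin n) ℂ) :
    pderiv i (g i j p) + pderiv j (g i j p) = g i j (pderiv i p + pderiv j p) := by
  refine gcancel h ?_
  have hpi : pderiv i (rename (⇑(Equiv.swap i j)) p) = rename (⇑(Equiv.swap i j)) (pderiv j p) := by
    have := pderiv_rename (f := ⇑(Equiv.swap i j)) (Equiv.injective _) j p
    rwa [Equiv.swap_apply_right] at this
  have hpj : pderiv j (rename (⇑(Equiv.swap i j)) p) = rename (⇑(Equiv.swap i j)) (pderiv i p) := by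
    have := pderiv_rename (f := ⇑(Equiv.swap i j)) (Equiv.injective _) i p
    rwa [Equiv.swap_apply_left] at this
  have e1 := pderiv_mul (i := i) (f := (X i - X j : MvPolynomial (Fin n) ℂ)) (g := g i j p)
  have e2 := pderiv_mul (i := j) (f := (X i - X j : MvPolynomial (Fin n) ℂ)) (g := g i j p)
  have hzi : pderiv i (X i - X j : MvPolynomial (Fin n) ℂ) = 1 := by
    rw [map_sub, pderiv_X_self, pderiv_X_of_ne h.symm, sub_zero]
  have hzj : pderiv j (X i - X j : MvPolynomial (Fin n) ℂ) = -1 := by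
    rw [map_sub, pderiv_X_self, pderiv_X_of_ne h, zero_sub]
  rw [hg, hzi, map_sub, hpi] at e1
  rw [hg, hzj, map_sub, hpj] at e2
  have e3 := hg i j (pderiv i p + pderiv j p)
  rw [map_add] at e3
  linear_combination -e1 - e2 - e3

lemma g_disjoint {i j k l : Fin n} (hij : i ≠ j) (hkl : k ≠ l)
    (hki : k ≠ i) (hkj : k ≠ j) (hli : l ≠ i) (hlj : l ≠ j)
    (f : MvPolynomial (Fin n) ℂ) :
    g i j (g k l f) = g k l (g i j f) := by
  refine gcancel hij ?_
  have hr : rename (Equiv.swap i j) (g k l f) = g k l (rename (Equiv.swap i j) f) := by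
    have := g_rename hg (Equiv.swap i j) hkl f
    rwa [Equiv.swap_apply_of_ne_of_ne hki hkj, Equiv.swap_apply_of_ne_of_ne hli hlj] at this
  have hq : rename (Equiv.swap k l) (X i - X j : MvPolynomial (Fin n) ℂ) = X i - X j := by
    rw [map_sub, rename_X, rename_X, Equiv.swap_apply_of_ne_of_ne hki.symm hli.symm,
      Equiv.swap_apply_of_ne_of_ne hkj.symm hlj.symm]
  calc (X i - X j) * g i j (g k l f)
      = g k l f - g k l (rename (Equiv.swap i j) f) := by rw [hg, hr]
    _ = g k l (f - rename (Equiv.swap i j) f) := (g_sub hg hkl _ _).symm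
    _ = g k l ((X i - X j) * g i j f) := by rw [← hg]
    _ = (X i - X j) * g k l (g i j f) := g_mul_sym hg hkl hq _

lemma g_triple {i j m : Fin n} (hij : i ≠ j) (him : i ≠ m) (hjm : j ≠ m)
    (f : MvPolynomial (Fin n) ℂ) :
    (g i j (g j m f) - g j m (g i j f)) + (g i m (g j i f) - g j i (g i m f))
      + (g i m (g j m f) - g j m (g i m f)) = 0 := by
  rw [g_swap hg hij f, g_swap hg hij (g i m f), g_neg hg him]
  -- pointwise swap facts
  have sa_m : Equiv.swap i j m = m := Equiv.swap_apply_of_ne_of_ne him.symm hjm.symm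
  have sb_i : Equiv.swap j m i = i := Equiv.swap_apply_of_ne_of_ne hij him
  have sc_j : Equiv.swap i m j = j := Equiv.swap_apply_of_ne_of_ne hij.symm hjm
  -- composition facts
  have comp_eq : ∀ (σ τ : Equiv.Perm (Fin n)), (∀ x, σ x = τ x) → (⇑σ : Fin n → Fin n) = ⇑τ :=
    fun σ τ h => funext h
  have swap_cases : ∀ (F G : Fin n → Fin n), (F i = G i) → (F j = G j) → (F m = G m) →
      (∀ x, x ≠ i → x ≠ j → x ≠ m → F x = G x) → F = G := by
    intro F G h1 h2 h3 h4
    funext x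
    rcases eq_or_ne x i with rfl | hxi
    · exact h1
    rcases eq_or_ne x j with rfl | hxj
    · exact h2
    rcases eq_or_ne x m with rfl | hxm
    · exact h3
    exact h4 x hxi hxj hxm
  have fix3 : ∀ x : Fin n, x ≠ i → x ≠ j → x ≠ m →
      (Equiv.swap i j x = x ∧ Equiv.swap j m x = x ∧ Equiv.swap i m x = x) := by
    intro x h1 h2 h3
    exact ⟨Equiv.swap_apply_of_ne_of_ne h1 h2, Equiv.swap_apply_of_ne_of_ne h2 h3,
      Equiv.swap_apply_of_ne_of_ne h1 h3⟩
  have ec1 : (⇑(Equiv.swap i m) ∘ ⇑(Equiv.swap i j) : Fin n → Fin n)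
      = ⇑(Equiv.swap i j) ∘ ⇑(Equiv.swap j m) := by
    apply swap_cases <;>
      simp only [Function.comp_apply, Equiv.swap_apply_left, Equiv.swap_apply_right,
        sa_m, sb_i, sc_j]
    intro x h1 h2 h3
    simp only [Function.comp_apply, (fix3 x h1 h2 h3).1, (fix3 x h1 h2 h3).2.1,
      (fix3 x h1 h2 h3).2.2]
  have ec2 : (⇑(Equiv.swap i m) ∘ ⇑(Equiv.swap j m) : Fin n → Fin n)
      = ⇑(Equiv.swap j m) ∘ ⇑(Equiv.swap i j) := by
    apply swap_cases <;>
      simp only [Function.comp_apply, Equiv.swap_apply_left, Equiv.swap_apply_right,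
        sa_m, sb_i, sc_j]
    intro x h1 h2 h3
    simp only [Function.comp_apply, (fix3 x h1 h2 h3).1, (fix3 x h1 h2 h3).2.1,
      (fix3 x h1 h2 h3).2.2]
  have ec3 : (⇑(Equiv.swap j m) ∘ ⇑(Equiv.swap i m) : Fin n → Fin n)
      = ⇑(Equiv.swap i j) ∘ ⇑(Equiv.swap j m) := by
    apply swap_cases <;>
      simp only [Function.comp_apply, Equiv.swap_apply_left, Equiv.swap_apply_right,
        sa_m, sb_i, sc_j]
    intro x h1 h2 h3
    simp only [Function.comp_apply, (fix3 x h1 h2 h3).1, (fix3 x h1 h2 h3).2.1,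
      (fix3 x h1 h2 h3).2.2]
  have ec4 : (⇑(Equiv.swap i j) ∘ ⇑(Equiv.swap i m) : Fin n → Fin n)
      = ⇑(Equiv.swap j m) ∘ ⇑(Equiv.swap i j) := by
    apply swap_cases <;>
      simp only [Function.comp_apply, Equiv.swap_apply_left, Equiv.swap_apply_right,
        sa_m, sb_i, sc_j]
    intro x h1 h2 h3
    simp only [Function.comp_apply, (fix3 x h1 h2 h3).1, (fix3 x h1 h2 h3).2.1,
      (fix3 x h1 h2 h3).2.2]
  -- expansion equations
  have A1 : (X i - X j) * g i j (g j m f)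
      = g j m f - g i m (rename (⇑(Equiv.swap i j)) f) := by
    rw [hg]
    have h1 := g_rename hg (Equiv.swap i j) hjm f
    rw [Equiv.swap_apply_right, sa_m] at h1
    rw [h1]
  have A2 : (X j - X m) * g j m (g i j f)
      = g i j f - g i m (rename (⇑(Equiv.swap j m)) f) := by
    rw [hg]
    have h1 := g_rename hg (Equiv.swap j m) hij f
    rw [sb_i, Equiv.swap_apply_left] at h1
    rw [h1]
  have A3 : (X i - X j) * g i j (g i m f)
      = g i m f - g j m (rename (⇑(Equiv.swap i j)) f) := by
    rw [hg]
    have h1 := g_rename hg (Equiv.swap i j) him f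
    rw [Equiv.swap_apply_left, sa_m] at h1
    rw [h1]
  have A4 : (X i - X m) * g i m (g i j f)
      = g i j f + g j m (rename (⇑(Equiv.swap i m)) f) := by
    rw [hg]
    have h1 := g_rename hg (Equiv.swap i m) hij f
    rw [Equiv.swap_apply_left, sc_j] at h1
    rw [h1, g_swap hg hjm]
    ring
  have A5 : (X i - X m) * g i m (g j m f)
      = g j m f + g i j (rename (⇑(Equiv.swap i m)) f) := by
    rw [hg]
    have h1 := g_rename hg (Equiv.swap i m) hjm f
    rw [sc_j, Equiv.swap_apply_right] at h1
    rw [h1, g_swap hg hij]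
    ring
  have A6 : (X j - X m) * g j m (g i m f)
      = g i m f - g i j (rename (⇑(Equiv.swap j m)) f) := by
    rw [hg]
    have h1 := g_rename hg (Equiv.swap j m) him f
    rw [sb_i, Equiv.swap_apply_right] at h1
    rw [h1]
  have B1 := hg i j f
  have B2 := hg j m f
  have B3 := hg i m f
  have B4 : (X j - X m) * g j m (rename (⇑(Equiv.swap i j)) f)
      = rename (⇑(Equiv.swap i j)) f - rename (⇑(Equiv.swap j m) ∘ ⇑(Equiv.swap i j)) f := by
    rw [hg, rename_rename]
  have B5 : (X i - X m) * g i m (rename (⇑(Equiv.swap i j)) f)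
      = rename (⇑(Equiv.swap i j)) f - rename (⇑(Equiv.swap i j) ∘ ⇑(Equiv.swap j m)) f := by
    rw [hg, rename_rename, ec1]
  have B6 : (X i - X m) * g i m (rename (⇑(Equiv.swap j m)) f)
      = rename (⇑(Equiv.swap j m)) f - rename (⇑(Equiv.swap j m) ∘ ⇑(Equiv.swap i j)) f := by
    rw [hg, rename_rename, ec2]
  have B7 : (X i - X j) * g i j (rename (⇑(Equiv.swap j m)) f)
      = rename (⇑(Equiv.swap j m)) f - rename (⇑(Equiv.swap i j) ∘ ⇑(Equiv.swap j m)) f := by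
    rw [hg, rename_rename]
  have B8 : (X j - X m) * g j m (rename (⇑(Equiv.swap i m)) f)
      = rename (⇑(Equiv.swap i m)) f - rename (⇑(Equiv.swap i j) ∘ ⇑(Equiv.swap j m)) f := by
    rw [hg, rename_rename, ec3]
  have B9 : (X i - X j) * g i j (rename (⇑(Equiv.swap i m)) f)
      = rename (⇑(Equiv.swap i m)) f - rename (⇑(Equiv.swap j m) ∘ ⇑(Equiv.swap i j)) f := by
    rw [hg, rename_rename, ec4]
  have hX : ((X i - X j) * (X j - X m) * (X i - X m) : MvPolynomial (Fin n) ℂ) ≠ 0 :=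
    mul_ne_zero (mul_ne_zero (Xsub_ne hij) (Xsub_ne hjm)) (Xsub_ne him)
  refine mul_left_cancel₀ hX ?_
  rw [mul_zero]
  linear_combination ((X j - X m) * (X i - X m)) * A1 - ((X i - X j) * (X i - X m)) * A2
    + ((X j - X m) * (X i - X m)) * A3 - ((X i - X j) * (X j - X m)) * A4
    + ((X i - X j) * (X j - X m)) * A5 - ((X i - X j) * (X i - X m)) * A6
    + (-(X i - X m) - (X j - X m)) * B1 + ((X i - X m) + (X i - X j)) * B2
    + ((X j - X m) - (X i - X j)) * B3
    - (X i - X m) * B4 - (X j - X m) * B5 + (X i - X j) * B6 + (X i - X m) * B7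
    - (X i - X j) * B8 + (X j - X m) * B9

end

lemma pderiv_comm' (i j : Fin n) (f : MvPolynomial (Fin n) ℂ) :
    pderiv i (pderiv j f) = pderiv j (pderiv i f) := by
  induction f using MvPolynomial.induction_on' with
  | monomial s a =>
    simp only [pderiv_monomial]
    rcases eq_or_ne i j with rfl | hij
    · rfl
    · have e1 : (s - Finsupp.single j 1 : Fin n →₀ ℕ) i = s i := by
        rw [Finsupp.tsub_apply, Finsupp.single_apply, if_neg hij.symm, tsub_zero]
      have e2 : (s - Finsupp.single i 1 : Fin n →₀ ℕ) j = s j := by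
        rw [Finsupp.tsub_apply, Finsupp.single_apply, if_neg hij, tsub_zero]
      have e3 : s - Finsupp.single j 1 - Finsupp.single i 1
          = s - Finsupp.single i 1 - Finsupp.single j 1 := by
        ext b
        simp only [Finsupp.tsub_apply, Finsupp.single_apply]
        split_ifs <;> omega
      rw [e1, e2, e3, mul_right_comm]
  | add p q hp hq => simp only [map_add, hp, hq]

end DunklAux

open DunklAux in
/-- The Dunkl operators ∇_i = ∂_i + β Σ_{j≠i} (x_i - x_j)⁻¹(1 - K_{ij})
pairwise commute. Here g i j f denotes the polynomial (x_i - x_j)⁻¹(f - K_{ij}f). -/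
theorem dunkl_operators_commute (n : ℕ) (β : ℂ)
    (g : Fin n → Fin n → MvPolynomial (Fin n) ℂ → MvPolynomial (Fin n) ℂ)
    (hg : ∀ i j f, (X i - X j) * g i j f = f - rename (Equiv.swap i j) f)
    (N : Fin n → MvPolynomial (Fin n) ℂ → MvPolynomial (Fin n) ℂ)
    (hN : ∀ i f, N i f = pderiv i f + β • ∑ j ∈ Finset.univ.erase i, g i j f) :
    ∀ i j f, N i (N j f) = N j (N i f) := by
  -- expansion lemma
  have N_N : ∀ i j : Fin n, i ≠ j → ∀ f, N i (N j f)
      = pderiv i (pderiv j f) + β • ∑ l ∈ Finset.univ.erase j, pderiv i (g j l f)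
        + (β • ∑ k ∈ Finset.univ.erase i, g i k (pderiv j f)
          + β • β • ∑ k ∈ Finset.univ.erase i, ∑ l ∈ Finset.univ.erase j, g i k (g j l f)) := by
    intro i j hij f
    rw [hN j f, hN i]
    have hpd : (pderiv i) (pderiv j f + β • ∑ l ∈ Finset.univ.erase j, g j l f)
        = pderiv i (pderiv j f) + β • ∑ l ∈ Finset.univ.erase j, pderiv i (g j l f) := by
      rw [map_add, Derivation.map_smul, map_sum]
    have hgk : ∀ k ∈ Finset.univ.erase i,
        g i k (pderiv j f + β • ∑ l ∈ Finset.univ.erase j, g j l f)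
        = g i k (pderiv j f) + β • ∑ l ∈ Finset.univ.erase j, g i k (g j l f) := by
      intro k hk
      have hik : i ≠ k := (Finset.ne_of_mem_erase hk).symm
      rw [g_add hg hik, g_smul hg hik, g_sum hg hik]
    rw [hpd, Finset.sum_congr rfl hgk, Finset.sum_add_distrib, smul_add, ← Finset.smul_sum]
  intro i j f
  rcases eq_or_ne i j with rfl | hij
  · rfl
  rw [N_N i j hij f, N_N j i hij.symm f]
  have hD := pderiv_comm' i j f
  -- cross term
  have key1 : (∑ l ∈ Finset.univ.erase j, pderiv i (g j l f))
      - (∑ l ∈ Finset.univ.erase j, g j l (pderiv i f))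
      = pderiv i (g j i f) - g j i (pderiv i f) := by
    rw [← Finset.sum_sub_distrib]
    refine Finset.sum_eq_single_of_mem i (Finset.mem_erase.mpr ⟨hij, Finset.mem_univ i⟩) ?_
    intro l hl hli
    rw [g_pd_other hg (Finset.ne_of_mem_erase hl).symm hij hli.symm, sub_self]
  have key2 : (∑ k ∈ Finset.univ.erase i, g i k (pderiv j f))
      - (∑ k ∈ Finset.univ.erase i, pderiv j (g i k f))
      = g i j (pderiv j f) - pderiv j (g i j f) := by
    rw [← Finset.sum_sub_distrib]
    refine Finset.sum_eq_single_of_mem j (Finset.mem_erase.mpr ⟨hij.symm, Finset.mem_univ j⟩) ?_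
    intro k hk hkj
    rw [g_pd_other hg (Finset.ne_of_mem_erase hk).symm hij.symm hkj.symm, sub_self]
  have hswap2 := g_swap hg hij (pderiv i f)
  have hneg : pderiv i (g j i f) = -(pderiv i (g i j f)) := by
    rw [g_swap hg hij f, map_neg]
  have hadd := g_add hg hij (pderiv i f) (pderiv j f)
  have hsum := g_pd_sum hg hij f
  have hcross : (∑ l ∈ Finset.univ.erase j, pderiv i (g j l f))
      + (∑ k ∈ Finset.univ.erase i, g i k (pderiv j f))
      = (∑ k ∈ Finset.univ.erase i, pderiv j (g i k f))
      + (∑ l ∈ Finset.univ.erase j, g j l (pderiv i f)) := by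
    linear_combination key1 + key2 + hneg - hswap2 - hadd - hsum
  -- the quadratic term
  have hE : (∑ k ∈ Finset.univ.erase i, ∑ l ∈ Finset.univ.erase j, g i k (g j l f))
      = (∑ l ∈ Finset.univ.erase j, ∑ k ∈ Finset.univ.erase i, g j l (g i k f)) := by
    conv_rhs => rw [Finset.sum_comm]
    rw [← sub_eq_zero, ← Finset.sum_sub_distrib]
    have hsub : ∀ k, (∑ l ∈ Finset.univ.erase j, g i k (g j l f))
        - (∑ l ∈ Finset.univ.erase j, g j l (g i k f))
        = ∑ l ∈ Finset.univ.erase j, (g i k (g j l f) - g j l (g i k f)) :=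
      fun k => (Finset.sum_sub_distrib _ _).symm
    calc (∑ k ∈ Finset.univ.erase i, ((∑ l ∈ Finset.univ.erase j, g i k (g j l f))
            - ∑ l ∈ Finset.univ.erase j, g j l (g i k f)))
        = ∑ k ∈ Finset.univ.erase i, ∑ l ∈ Finset.univ.erase j,
            (g i k (g j l f) - g j l (g i k f)) := Finset.sum_congr rfl fun k _ => hsub k
      _ = 0 := ?_
    set s := (Finset.univ.erase i).erase j with hs
    have hjs : j ∉ s := Finset.notMem_erase _ _
    have his : i ∉ s := fun h => Finset.notMem_erase i Finset.univ (Finset.mem_of_mem_erase h)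
    have hmem : ∀ k ∈ s, k ≠ i ∧ k ≠ j := fun k hk =>
      ⟨(Finset.mem_erase.mp (Finset.mem_of_mem_erase hk)).1, (Finset.mem_erase.mp hk).1⟩
    have hrw1 : Finset.univ.erase i = insert j s :=
      (Finset.insert_erase (Finset.mem_erase.mpr ⟨hij.symm, Finset.mem_univ j⟩)).symm
    have hrw2 : Finset.univ.erase j = insert i s := by
      rw [hs, Finset.erase_right_comm]
      exact (Finset.insert_erase (Finset.mem_erase.mpr ⟨hij, Finset.mem_univ i⟩)).symm
    rw [hrw1, Finset.sum_insert hjs]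
    simp only [hrw2, Finset.sum_insert his]
    have hinner : ∀ k ∈ s, (∑ l ∈ s, (g i k (g j l f) - g j l (g i k f)))
        = g i k (g j k f) - g j k (g i k f) := by
      intro k hk
      refine Finset.sum_eq_single_of_mem k hk ?_
      intro l hl hlk
      rw [g_disjoint hg ((hmem k hk).1.symm) ((hmem l hl).2.symm) hij.symm
        ((hmem k hk).2.symm) ((hmem l hl).1) hlk, sub_self]
    have hCji : g i j (g j i f) - g j i (g i j f) = 0 := by
      rw [g_swap hg hij f, g_swap hg hij (g i j f), g_neg hg hij]
      ring
    rw [hCji, zero_add, ← Finset.sum_add_distrib]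
    refine Finset.sum_eq_zero ?_
    intro m hm
    rw [hinner m hm]
    have htrip := g_triple hg hij ((hmem m hm).1.symm) ((hmem m hm).2.symm) f
    linear_combination htrip
  simp only [smul_eq_C_mul]
  linear_combination hD + C β * hcross + (C β * C β) * hE
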